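/- Double robustness of the augmented IPW estimating function in the sampling mechanism: suppose R ⟂ X | V and let f(X) be bounded with E[f(X)] = ψ. Let g'(v) be any function with g'(v) > 0, and let m(v) := E[f(X) | R = 1, V = v] be the true conditional mean. Then E[ (R/g'(V)) f(X) + (1 − R/g'(V)) m(V) ] = ψ, even if g' ≠ g_R. That is, the estimating function remains unbiased if the outcome regression m is correct but the sampling probability is misspecified. -/

import Mathlib

open scoped Classical BigOperators

noncomputable def Pr {Ω : Type*} [Fintype Ω] (p : Ω → ℝ) (E : Ω → Prop) : ℝ :=
  ∑ ω, if E ω then p ω else 0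

noncomputable def Ex {Ω : Type*} [Fintype Ω] (p : Ω → ℝ) (X : Ω → ℝ) : ℝ :=
  ∑ ω, p ω * X ω

noncomputable def CEx {Ω : Type*} [Fintype Ω] (p : Ω → ℝ) (X : Ω → ℝ) (E : Ω → Prop) : ℝ :=
  (∑ ω, if E ω then p ω * X ω else 0) / Pr p E

noncomputable def CPr {Ω : Type*} [Fintype Ω] (p : Ω → ℝ) (E F : Ω → Prop) : ℝ :=
  Pr p (fun ω => E ω ∧ F ω) / Pr p F

private lemma group_sum {Ω α : Type*} [Fintype Ω] (g : Ω → ℝ) (Y : Ω → α) :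
    ∑ ω, g ω = ∑ y ∈ Finset.univ.image Y, ∑ ω, (if Y ω = y then g ω else 0) := by
  classical
  rw [Finset.sum_comm]
  refine Finset.sum_congr rfl fun ω _ => ?_
  rw [Finset.sum_eq_single (Y ω)]
  · simp
  · intro y _ hy
    have h : ¬ (Y ω = y) := fun h => hy (h ▸ rfl)
    simp [h]
  · intro h
    exact absurd (Finset.mem_image_of_mem Y (Finset.mem_univ ω)) h

private lemma Pr_congr {Ω : Type*} [Fintype Ω] (p : Ω → ℝ) {E F : Ω → Prop}
    (h : ∀ ω, E ω ↔ F ω) : Pr p E = Pr p F := by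
  unfold Pr
  exact Finset.sum_congr rfl fun ω _ => if_congr (h ω) rfl rfl

private lemma Pr_nonneg {Ω : Type*} [Fintype Ω] {p : Ω → ℝ} (hp : ∀ ω, 0 ≤ p ω)
    (Q : Ω → Prop) : 0 ≤ Pr p Q := by
  refine Finset.sum_nonneg fun ω _ => ?_
  split
  · exact hp ω
  · exact le_refl 0

private lemma p_eq_zero {Ω : Type*} [Fintype Ω] {p : Ω → ℝ} (hp : ∀ ω, 0 ≤ p ω)
    {Q : Ω → Prop} (h0 : Pr p Q = 0) {ω : Ω} (hω : Q ω) : p ω = 0 := by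
  classical
  have hnn : ∀ i ∈ Finset.univ, (0:ℝ) ≤ if Q i then p i else 0 := by
    intro i _
    split
    · exact hp i
    · exact le_refl 0
  have := (Finset.sum_eq_zero_iff_of_nonneg hnn).mp h0 ω (Finset.mem_univ ω)
  simpa [hω] using this

/-- double robustness in the sampling mechanism. If `R ⟂ X | V`,
`E[f(X)] = ψ`, `g'` is an arbitrary strictly positive function of `v`, and
`m(v) = E[f(X) | R = 1, V = v]` is the true conditional mean, then
`E[(R/g'(V)) f(X) + (1 − R/g'(V)) m(V)] = ψ`, even if `g' ≠ g_R`. -/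
theorem double_robustness_sampling_misspecified {Ω 𝕏 𝕍 : Type*} [Fintype Ω]
    (p : Ω → ℝ) (hp : ∀ ω, 0 ≤ p ω) (hp1 : ∑ ω, p ω = 1)
    (X : Ω → 𝕏) (V : Ω → 𝕍) (R : Ω → Bool)
    (hVX : ∀ ω ω', X ω = X ω' → V ω = V ω')
    (hCI : ∀ v : 𝕍, Pr p (fun ω => V ω = v) > 0 → ∀ (x : 𝕏) (r : Bool),
      CPr p (fun ω => X ω = x ∧ R ω = r) (fun ω => V ω = v)
        = CPr p (fun ω => X ω = x) (fun ω => V ω = v)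
          * CPr p (fun ω => R ω = r) (fun ω => V ω = v))
    (hRpos : ∀ v : 𝕍, Pr p (fun ω => V ω = v) > 0 →
      CPr p (fun ω => R ω = true) (fun ω => V ω = v) > 0)
    (g' : 𝕍 → ℝ) (hg' : ∀ v, 0 < g' v)
    (f : 𝕏 → ℝ) (ψ : ℝ) (hf : Ex p (fun ω => f (X ω)) = ψ) :
    Ex p (fun ω =>
        (if R ω then 1 else 0) / g' (V ω) * f (X ω)
          + (1 - (if R ω then 1 else 0) / g' (V ω))
            * CEx p (fun ω' => f (X ω')) (fun ω' => R ω' = true ∧ V ω' = V ω))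
      = ψ := by
  classical
  set m : 𝕍 → ℝ := fun v =>
    CEx p (fun ω' => f (X ω')) (fun ω' => R ω' = true ∧ V ω' = v) with hm
  have key : ∀ v : 𝕍,
      (∑ ω, if V ω = v then
          p ω * ((if R ω then 1 else 0) / g' (V ω) * f (X ω)
            + (1 - (if R ω then 1 else 0) / g' (V ω)) * m (V ω)) else 0)
        = ∑ ω, if V ω = v then p ω * f (X ω) else 0 := by
    intro v
    by_cases hD : Pr p (fun ω => V ω = v) = 0
    · refine Finset.sum_congr rfl fun ω _ => ?_
      by_cases hv : V ω = v
      · have h0 : p ω = 0 := p_eq_zero hp hD hv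
        simp [hv, h0]
      · simp [hv]
    · have hDpos : 0 < Pr p (fun ω => V ω = v) :=
        lt_of_le_of_ne (Pr_nonneg hp _) (Ne.symm hD)
      set D := Pr p (fun ω => V ω = v) with hDdef
      set B := Pr p (fun ω => R ω = true ∧ V ω = v) with hBdef
      set A := ∑ ω, (if R ω = true ∧ V ω = v then p ω * f (X ω) else 0) with hAdef
      set C := ∑ ω, (if V ω = v then p ω * f (X ω) else 0) with hCdef
      have hBpos : 0 < B := by
        have h := hRpos v hDpos
        unfold CPr at h
        rcases div_pos_iff.mp h with ⟨h1, _⟩ | ⟨_, h2⟩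
        · exact h1
        · linarith
      have hmv : m v = A / B := by
        have e1 : m v = (∑ ω, if R ω = true ∧ V ω = v then p ω * f (X ω) else 0) / B := by
          simp only [hm, CEx]
          rfl
        rw [e1, ← hAdef]
      -- conditional independence gives A * D = C * B
      have hADCB : A * D = C * B := by
        have hA : A = ∑ x ∈ Finset.univ.image X, f x *
            Pr p (fun ω => X ω = x ∧ R ω = true ∧ V ω = v) := by
          rw [hAdef,
            group_sum (fun ω => if R ω = true ∧ V ω = v then p ω * f (X ω) else 0) X]
          refine Finset.sum_congr rfl fun x _ => ?_
          simp only [Pr, Finset.mul_sum]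
          refine Finset.sum_congr rfl fun ω _ => ?_
          by_cases hx : X ω = x
          · by_cases h : R ω = true ∧ V ω = v
            · simp [hx, h, mul_comm]
            · simp [hx, h]
          · simp [hx]
        have hC : C = ∑ x ∈ Finset.univ.image X, f x *
            Pr p (fun ω => X ω = x ∧ V ω = v) := by
          rw [hCdef, group_sum (fun ω => if V ω = v then p ω * f (X ω) else 0) X]
          refine Finset.sum_congr rfl fun x _ => ?_
          simp only [Pr, Finset.mul_sum]
          refine Finset.sum_congr rfl fun ω _ => ?_
          by_cases hx : X ω = x
          · by_cases h : V ω = v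
            · simp [hx, h, mul_comm]
            · simp [hx, h]
          · simp [hx]
        have hx : ∀ x : 𝕏,
            Pr p (fun ω => X ω = x ∧ R ω = true ∧ V ω = v) * D
              = Pr p (fun ω => X ω = x ∧ V ω = v) * B := by
          intro x
          have h := hCI v hDpos x true
          unfold CPr at h
          have hre : Pr p (fun ω => (X ω = x ∧ R ω = true) ∧ V ω = v)
              = Pr p (fun ω => X ω = x ∧ R ω = true ∧ V ω = v) :=
            Pr_congr p fun ω => and_assoc
          rw [hre] at h
          have hD' : Pr p (fun ω => V ω = v) ≠ 0 := ne_of_gt hDpos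
          field_simp at h
          rw [hDdef, hBdef]
          apply mul_right_cancel₀ hD'
          linear_combination (Pr p (fun ω => V ω = v)) * h
        rw [hA, hC, Finset.sum_mul, Finset.sum_mul]
        refine Finset.sum_congr rfl fun x _ => ?_
        rw [mul_assoc, mul_assoc, hx x]
      have hB' : B ≠ 0 := ne_of_gt hBpos
      have hmvD : m v * D = C := by
        rw [hmv]
        field_simp
        linear_combination hADCB
      -- now compute the sum
      have hsplit : (∑ ω, if V ω = v then
            p ω * ((if R ω then 1 else 0) / g' (V ω) * f (X ω)
              + (1 - (if R ω then 1 else 0) / g' (V ω)) * m (V ω)) else 0)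
          = (A - m v * B) / g' v + m v * D := by
        have hterm : (∑ ω, if V ω = v then
              p ω * ((if R ω then 1 else 0) / g' (V ω) * f (X ω)
                + (1 - (if R ω then 1 else 0) / g' (V ω)) * m (V ω)) else 0)
            = ∑ ω, (((if R ω = true ∧ V ω = v then p ω * f (X ω) else 0)
                - m v * (if R ω = true ∧ V ω = v then p ω else 0)) / g' v
              + m v * (if V ω = v then p ω else 0)) := by
          refine Finset.sum_congr rfl fun ω _ => ?_
          by_cases hv : V ω = v
          · rw [hv]
            by_cases hr : R ω = true
            · simp only [hv, hr, and_self, if_true, true_and]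
              have hg : g' v ≠ 0 := ne_of_gt (hg' v)
              field_simp
              ring
            · have hrf : R ω = false := by simpa using hr
              simp only [hv, hrf, Bool.false_eq_true, if_false, false_and, if_true]
              ring
          · have h2 : ¬ (R ω = true ∧ V ω = v) := fun h => hv h.2
            simp [hv, h2]
        rw [hterm, Finset.sum_add_distrib]
        congr 1
        · rw [← Finset.sum_div]
          congr 1
          rw [Finset.sum_sub_distrib, ← Finset.mul_sum]
          have hBsum : (∑ ω, if R ω = true ∧ V ω = v then p ω else 0) = B := by
            rw [hBdef]
            unfold Pr
            refine Finset.sum_congr rfl fun ω _ => ?_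
            by_cases h : R ω = true ∧ V ω = v <;> simp [h]
          rw [← hAdef, hBsum]
        · rw [← Finset.mul_sum]
          have hDsum : (∑ ω, if V ω = v then p ω else 0) = D := by
            rw [hDdef]
            unfold Pr
            refine Finset.sum_congr rfl fun ω _ => ?_
            by_cases h : V ω = v <;> simp [h]
          rw [hDsum]
      rw [hsplit]
      have hA0 : A - m v * B = 0 := by
        rw [hmv]
        field_simp
        ring
      rw [hA0, zero_div, zero_add, hmvD]
  have hEx := group_sum (fun ω =>
      p ω * ((if R ω then 1 else 0) / g' (V ω) * f (X ω)
        + (1 - (if R ω then 1 else 0) / g' (V ω)) * m (V ω))) V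
  have hψ := group_sum (fun ω => p ω * f (X ω)) V
  calc Ex p (fun ω =>
        (if R ω then 1 else 0) / g' (V ω) * f (X ω)
          + (1 - (if R ω then 1 else 0) / g' (V ω))
            * CEx p (fun ω' => f (X ω')) (fun ω' => R ω' = true ∧ V ω' = V ω))
      = ∑ v ∈ Finset.univ.image V, ∑ ω, (if V ω = v then
          p ω * ((if R ω then 1 else 0) / g' (V ω) * f (X ω)
            + (1 - (if R ω then 1 else 0) / g' (V ω)) * m (V ω)) else 0) := hEx
    _ = ∑ v ∈ Finset.univ.image V, ∑ ω, (if V ω = v then p ω * f (X ω) else 0) :=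
        Finset.sum_congr rfl fun v _ => key v
    _ = Ex p (fun ω => f (X ω)) := hψ.symm
    _ = ψ := hf
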